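/- arXiv:1303.2881 — 2 statements merged into one kernel-verified Lean document; each statement's English description precedes it below -/
import Mathlib

section
/- Let p be a prime with p ≡ 1 (mod 4), and let a, b be nonzero integers with a² + b² = p. Then the complex number (a + bi)/√p is not a root of unity; equivalently, writing a + bi = √p·e^{iθ}, the angle θ is not a rational multiple of π. -/
open scoped Real

lemma root_of_unity_integral {z : ℂ} {n : ℕ} (hn : 0 < n) (hz : z ^ n = 1) :
    IsIntegral ℤ z := by
  refine ⟨Polynomial.X ^ n - 1, ?_, ?_⟩
  · exact Polynomial.monic_X_pow_sub_C 1 hn.ne'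
  · simp [hz]

/-- for a prime p ≡ 1 (mod 4) with p = a² + b², the number (a+bi)/√p is
not a root of unity. -/
theorem statement9 (p : ℕ) (hp : p.Prime) (hp4 : p % 4 = 1) (a b : ℤ)
    (ha : a ≠ 0) (hb : b ≠ 0) (hab : a ^ 2 + b ^ 2 = (p : ℤ)) :
    ¬ ∃ n : ℕ, 0 < n ∧ (((a : ℂ) + (b : ℂ) * Complex.I) / ((Real.sqrt p : ℝ) : ℂ)) ^ n = 1 := by
  rintro ⟨n, hn, hzn⟩
  set z : ℂ := (((a : ℂ) + (b : ℂ) * Complex.I) / ((Real.sqrt p : ℝ) : ℂ)) with hzdef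
  have hppos : 0 < (p : ℝ) := by exact_mod_cast hp.pos
  have hsqrt_ne : ((Real.sqrt p : ℝ) : ℂ) ≠ 0 := by
    rw [Complex.ofReal_ne_zero]
    exact Real.sqrt_ne_zero'.mpr hppos
  -- z and its conjugate are algebraic integers
  have hzint : IsIntegral ℤ z := root_of_unity_integral hn hzn
  have hconjn : (starRingEnd ℂ z) ^ n = 1 := by
    rw [← map_pow, hzn, map_one]
  have hconjint : IsIntegral ℤ (starRingEnd ℂ z) := root_of_unity_integral hn hconjn
  -- (z + conj z)^2 = 4a²/p
  have hsum : z + starRingEnd ℂ z = 2 * (a : ℂ) / ((Real.sqrt p : ℝ) : ℂ) := by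
    rw [hzdef]
    rw [map_div₀, map_add, map_mul]
    simp only [Complex.conj_ofReal, Complex.conj_I, map_intCast]
    ring
  have hsq : (z + starRingEnd ℂ z) ^ 2 = (4 * (a : ℂ) ^ 2) / (p : ℂ) := by
    rw [hsum, div_pow]
    have : ((Real.sqrt p : ℝ) : ℂ) ^ 2 = (p : ℂ) := by
      norm_cast
      rw [Real.sq_sqrt hppos.le]
    rw [this]
    ring_nf
  have hint : IsIntegral ℤ ((z + starRingEnd ℂ z) ^ 2) := (hzint.add hconjint).pow 2
  rw [hsq] at hint
  -- express it as a rational number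
  have hpne : (p : ℂ) ≠ 0 := by exact_mod_cast hp.pos.ne'
  have hq : (4 * (a : ℂ) ^ 2) / (p : ℂ) = ((4 * (a : ℚ) ^ 2 / (p : ℚ) : ℚ) : ℂ) := by
    push_cast
    ring
  rw [hq] at hint
  -- rational algebraic integer is an integer
  have hq_int : IsIntegral ℤ (4 * (a : ℚ) ^ 2 / (p : ℚ)) := by
    rwa [show ((4 * (a : ℚ) ^ 2 / (p : ℚ) : ℚ) : ℂ) =
        algebraMap ℚ ℂ (4 * (a : ℚ) ^ 2 / (p : ℚ)) from rfl,
      isIntegral_algebraMap_iff (algebraMap ℚ ℂ).injective] at hint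
  obtain ⟨m, hm⟩ := IsIntegrallyClosed.isIntegral_iff.mp hq_int
  -- so 4a² = m p in ℤ
  have hpq : (p : ℚ) ≠ 0 := by exact_mod_cast hp.pos.ne'
  have hmz : 4 * a ^ 2 = m * p := by
    have : (4 * (a : ℚ) ^ 2) = (m : ℚ) * (p : ℚ) := by
      field_simp at hm
      simp only [eq_intCast] at hm
      linarith [hm]
    exact_mod_cast this
  have hdvd : (p : ℤ) ∣ 4 * a ^ 2 := ⟨m, by linarith [hmz]⟩
  -- p is odd prime, so p ∣ a
  have hpz : Prime (p : ℤ) := Nat.prime_iff_prime_int.mp hp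
  have hp2 : p ≠ 2 := by omega
  have hpa : (p : ℤ) ∣ a := by
    rcases hpz.dvd_mul.mp hdvd with h | h
    · exfalso
      have h4 : p ∣ 4 := by exact_mod_cast h
      have : p ∣ 2 ^ 2 := by simpa using h4
      have := (Nat.prime_dvd_prime_iff_eq hp Nat.prime_two).mp (hp.dvd_of_dvd_pow this)
      exact hp2 this
    · exact hpz.dvd_of_dvd_pow h
  -- contradiction: a² ≥ p² > p = a² + b²
  have ha2 : (p : ℤ) ^ 2 ≤ a ^ 2 := by
    exact Int.le_of_dvd (by positivity) (pow_dvd_pow_of_dvd hpa 2)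
  have hb2 : 0 < b ^ 2 := by positivity
  have hpge : (2 : ℤ) ≤ p := by exact_mod_cast hp.two_le
  nlinarith [sq_nonneg ((p : ℤ) - 1)]
end

section
/- For every integer ℓ ≥ 3 there is a constant C(ℓ) depending only on ℓ such that the following holds. Let 0 < γ < 1/2 and let 𝓔 ⊂ ℤ² ∖ {0} be a finite set with |𝓔| = W ≥ 2, such that for every integer ℓ' with 3 ≤ ℓ' ≤ ℓ the number of non-degenerate ℓ'-tuples (ξ_1, …, ξ_{ℓ'}) ∈ 𝓔^{ℓ'} with ξ_1 + ⋯ + ξ_{ℓ'} = 0 is at most W^{γℓ'}. Call an ℓ-tuple (ξ_1, …, ξ_ℓ) ∈ 𝓔^ℓ with ξ_1 + ⋯ + ξ_ℓ = 0 'paired' if ℓ is even and {1, …, ℓ} can be partitioned into ℓ/2 two-element sets {i, j} with ξ_i + ξ_j = 0. Then the number of ℓ-tuples (ξ_1, …, ξ_ℓ) ∈ 𝓔^ℓ with ξ_1 + ⋯ + ξ_ℓ = 0 that are not paired is at most C(ℓ)·W^{ℓ/2 − 3(1/2 − γ)}. -/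
open scoped Real
open Filter MeasureTheory

noncomputable section

/-- Lattice points on the circle of radius √E. -/
def latticePts (E : ℕ) : Finset (ℤ × ℤ) :=
  (Finset.Icc (-(E : ℤ), -(E : ℤ)) ((E : ℤ), (E : ℤ))).filter fun ξ => ξ.1 ^ 2 + ξ.2 ^ 2 = (E : ℤ)

/-- The character x ↦ e(⟨ξ, x⟩) on the torus ℝ²/ℤ². -/
def torusChar (ξ : ℤ × ℤ) (x : AddCircle (1 : ℝ) × AddCircle (1 : ℝ)) : ℂ :=
  AddCircle.toCircle (ξ.1 • x.1 + ξ.2 • x.2)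

/-- The real-valued toral eigenfunction with coefficients `a`. -/
def eigenFun (E : ℕ) (a : ℤ × ℤ → ℂ) (x : AddCircle (1 : ℝ) × AddCircle (1 : ℝ)) : ℝ :=
  (∑ ξ ∈ latticePts E, a ξ * torusChar ξ x).re

/-- Number of nodal domains: connected components of {f ≠ 0}. -/
def nodalCount {X : Type*} [TopologicalSpace X] (f : X → ℝ) : ℕ :=
  Nat.card (ConnectedComponents {x : X // f x ≠ 0})

/-- A tuple is non-degenerate if no proper nonempty sub-sum vanishes. -/
def Nondegenerate {ℓ : ℕ} (v : Fin ℓ → ℤ × ℤ) : Prop :=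
  ∀ s : Finset (Fin ℓ), s.Nonempty → s ≠ Finset.univ → ∑ i ∈ s, v i ≠ 0

/-- Number of non-degenerate ℓ-tuples from 𝓔 summing to zero. -/
def nondegenCount (𝓔 : Finset (ℤ × ℤ)) (ℓ : ℕ) : ℕ :=
  Set.ncard {v : Fin ℓ → ℤ × ℤ | (∀ i, v i ∈ 𝓔) ∧ (∑ i, v i = 0) ∧ Nondegenerate v}

/-- Condition I(γ, B). -/
def CondI (γ : ℝ) (B : ℕ) (E : ℕ) : Prop :=
  ∀ ℓ : ℕ, 2 < ℓ → ℓ ≤ B →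
    (nondegenCount (latticePts E) ℓ : ℝ) ≤ ((latticePts E).card : ℝ) ^ (γ * (ℓ : ℝ))

/-- The set S of odd positive integers all of whose prime factors are ≡ 1 mod 4. -/
def goodE : Set ℕ := {E | Odd E ∧ 0 < E ∧ ∀ p : ℕ, p.Prime → p ∣ E → p % 4 = 1}

/-- Condition (D): equidistribution of 𝓔_{E n}/√(E n) on the unit circle. -/
def CondD (E : ℕ → ℕ) : Prop :=
  ∀ g : C(ℝ × ℝ, ℝ),
    Tendsto (fun n =>
        (∑ ξ ∈ latticePts (E n),
          g ((ξ.1 : ℝ) / Real.sqrt (E n), (ξ.2 : ℝ) / Real.sqrt (E n))) /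
          ((latticePts (E n)).card : ℝ))
      atTop (nhds (∫ θ in (0 : ℝ)..1, g (Real.cos (2 * π * θ), Real.sin (2 * π * θ))))

/-- A zero-sum tuple is paired if its index set splits into two-element blocks {i, j}
with v i + v j = 0 (equivalently, there is a fixed-point-free involution pairing
opposite entries; this forces ℓ to be even). -/
def Paired {ℓ : ℕ} (v : Fin ℓ → ℤ × ℤ) : Prop :=
  ∃ σ : Equiv.Perm (Fin ℓ),
    (∀ i, σ i ≠ i) ∧ (∀ i, σ (σ i) = i) ∧ ∀ i, v i + v (σ i) = 0


noncomputable section St12Aux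

variable {ι : Type*} [Fintype ι] [DecidableEq ι]

def St12.ZS (𝓔 : Finset (ℤ × ℤ)) (s : Finset ι) : Set (ι → ℤ × ℤ) :=
  {v | (∀ i ∈ s, v i ∈ 𝓔) ∧ (∀ i, i ∉ s → v i = 0) ∧ ∑ i ∈ s, v i = 0}

def St12.ZND (𝓔 : Finset (ℤ × ℤ)) (t : Finset ι) : Set (ι → ℤ × ℤ) :=
  St12.ZS 𝓔 t ∩ {v | ∀ t' ⊆ t, t'.Nonempty → t' ≠ t → ∑ i ∈ t', v i ≠ 0}

def St12.PairedOn (s : Finset ι) (v : ι → ℤ × ℤ) : Prop :=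
  ∃ σ : Equiv.Perm ι, (∀ i ∈ s, σ i ∈ s ∧ σ i ≠ i ∧ v i + v (σ i) = 0)
    ∧ (∀ i, σ (σ i) = i) ∧ ∀ i ∉ s, σ i = i

def St12.ZNP (𝓔 : Finset (ℤ × ℤ)) (s : Finset ι) : Set (ι → ℤ × ℤ) :=
  St12.ZS 𝓔 s ∩ {v | ¬ St12.PairedOn s v}

def St12.restr (t : Finset ι) (v : ι → ℤ × ℤ) : ι → ℤ × ℤ :=
  fun i => if i ∈ t then v i else 0

namespace St12

lemma ZS_finite (𝓔 : Finset (ℤ × ℤ)) (s : Finset ι) : (ZS 𝓔 s).Finite := by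
  apply (Set.Finite.pi' (t := fun _ : ι => ((insert 0 𝓔 : Finset (ℤ × ℤ)) : Set (ℤ × ℤ)))
    fun _ => (insert 0 𝓔).finite_toSet).subset
  intro v hv i
  by_cases hi : i ∈ s
  · exact Finset.mem_coe.2 (Finset.mem_insert_of_mem (hv.1 i hi))
  · simp [hv.2.1 i hi]

lemma ncard_le_mul {α β γ' : Type*} {Z : Set α} {A : Set β} {B : Set γ'} (f : α → β)
    (g : α → γ') (hA : A.Finite) (hB : B.Finite) (hmem : ∀ v ∈ Z, f v ∈ A ∧ g v ∈ B)
    (hinj : Set.InjOn (fun v => (f v, g v)) Z) : Z.ncard ≤ A.ncard * B.ncard := by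
  have h1 : Z.ncard ≤ (A ×ˢ B).ncard :=
    Set.ncard_le_ncard_of_injOn _ (fun v hv => Set.mk_mem_prod (hmem v hv).1 (hmem v hv).2)
      hinj (hA.prod hB)
  have h2 : (A ×ˢ B).ncard = A.ncard * B.ncard := by
    rw [← Nat.card_coe_set_eq, Nat.card_congr (Equiv.Set.prod A B), Nat.card_prod,
      Nat.card_coe_set_eq, Nat.card_coe_set_eq]
  exact h2 ▸ h1


lemma ncard_biUnion_le {α β : Type*} [DecidableEq β] (B : Finset β) (f : β → Set α) :
    (⋃ t ∈ B, f t).ncard ≤ ∑ t ∈ B, (f t).ncard := by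
  classical
  induction B using Finset.induction with
  | empty => simp
  | @insert a s ha ih =>
      rw [Finset.set_biUnion_insert, Finset.sum_insert ha]
      exact le_trans (Set.ncard_union_le _ _) (by gcongr)

lemma exists_block {𝓔 : Finset (ℤ × ℤ)} (h0 : (0 : ℤ × ℤ) ∉ 𝓔) {s : Finset ι}
    (hs : s.Nonempty) {v : ι → ℤ × ℤ} (hv : v ∈ ZS 𝓔 s) :
    ∃ t, t ⊆ s ∧ 2 ≤ t.card ∧ restr t v ∈ ZND 𝓔 t ∧ restr (s \ t) v ∈ ZS 𝓔 (s \ t) := by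
  classical
  set T := s.powerset.filter (fun t => t.Nonempty ∧ ∑ i ∈ t, v i = 0) with hT
  have hsT : s ∈ T := by
    simp only [hT, Finset.mem_filter, Finset.mem_powerset]
    exact ⟨le_refl s, hs, hv.2.2⟩
  obtain ⟨t, htT, hmin⟩ := T.exists_min_image Finset.card ⟨s, hsT⟩
  simp only [hT, Finset.mem_filter, Finset.mem_powerset] at htT
  obtain ⟨hts, htne, htsum⟩ := htT
  have hsum_restr : ∀ t' ⊆ t, ∑ i ∈ t', restr t v i = ∑ i ∈ t', v i := by
    intro t' ht'
    refine Finset.sum_congr rfl fun i hi => ?_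
    simp [restr, ht' hi]
  have hnd : ∀ t' ⊆ t, t'.Nonempty → t' ≠ t → ∑ i ∈ t', v i ≠ 0 := by
    intro t' ht' hne hne' hzero
    have ht'T : t' ∈ T := by
      simp only [hT, Finset.mem_filter, Finset.mem_powerset]
      exact ⟨ht'.trans hts, hne, hzero⟩
    have := hmin t' ht'T
    have hlt : t'.card < t.card := Finset.card_lt_card (lt_of_le_of_ne ht' hne')
    omega
  have hcard2 : 2 ≤ t.card := by
    rcases Nat.lt_or_ge t.card 2 with h | h
    · interval_cases h' : t.card
      · exact absurd (Finset.card_eq_zero.1 h') (Finset.nonempty_iff_ne_empty.1 htne)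
      · obtain ⟨i, rfl⟩ := Finset.card_eq_one.1 h'
        rw [Finset.sum_singleton] at htsum
        exact absurd (htsum ▸ hv.1 i (hts (Finset.mem_singleton_self i))) h0
    · exact h
  refine ⟨t, hts, hcard2, ⟨⟨?_, ?_, ?_⟩, ?_⟩, ?_, ?_, ?_⟩
  · intro i hi; simpa [restr, hi] using hv.1 i (hts hi)
  · intro i hi; simp [restr, hi]
  · rw [hsum_restr t (le_refl t)]; exact htsum
  · intro t' ht' hne hne' hzero
    rw [hsum_restr t' ht'] at hzero
    exact hnd t' ht' hne hne' hzero
  · intro i hi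
    have := Finset.mem_sdiff.1 hi
    simpa [restr, hi] using hv.1 i this.1
  · intro i hi; simp [restr, hi]
  · have : ∑ i ∈ s \ t, restr (s \ t) v i = ∑ i ∈ s \ t, v i :=
      Finset.sum_congr rfl fun i hi => by simp [restr, hi]
    rw [this, Finset.sum_sdiff_eq_sub hts, hv.2.2, htsum, sub_zero]

lemma restr_pair_injOn (𝓔 : Finset (ℤ × ℤ)) {s t : Finset ι} :
    Set.InjOn (fun v => (restr t v, restr (s \ t) v)) (ZS 𝓔 s) := by
  intro v hv w hw h
  have h1 : restr t v = restr t w := congrArg Prod.fst h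
  have h2 : restr (s \ t) v = restr (s \ t) w := congrArg Prod.snd h
  funext i
  by_cases hi : i ∈ t
  · simpa [restr, hi] using congrFun h1 i
  · by_cases hi2 : i ∈ s
    · have hm : i ∈ s \ t := Finset.mem_sdiff.2 ⟨hi2, hi⟩
      simpa [restr, hm] using congrFun h2 i
    · rw [hv.2.1 i hi2, hw.2.1 i hi2]

lemma ZND_card_two {𝓔 : Finset (ℤ × ℤ)} {t : Finset ι} (ht : t.card = 2) :
    (ZND 𝓔 t).ncard ≤ 𝓔.card := by
  obtain ⟨i, j, hij, rfl⟩ := Finset.card_eq_two.1 ht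
  rw [← Set.ncard_coe_finset]
  refine Set.ncard_le_ncard_of_injOn (fun v => v i) (fun v hv => ?_) ?_ 𝓔.finite_toSet
  · exact hv.1.1 i (Finset.mem_insert_self i {j})
  · intro v hv w hw h
    have hvs := hv.1.2.2; have hws := hw.1.2.2
    rw [Finset.sum_pair hij] at hvs hws
    funext x
    by_cases hx : x = i
    · subst hx; exact h
    · by_cases hx2 : x = j
      · subst hx2
        rw [eq_neg_of_add_eq_zero_right hvs, eq_neg_of_add_eq_zero_right hws]
        exact congrArg Neg.neg h
      · have hx3 : x ∉ ({i, j} : Finset ι) := by simp [hx, hx2]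
        rw [hv.1.2.1 x hx3, hw.1.2.1 x hx3]

lemma ZND_card_ge {𝓔 : Finset (ℤ × ℤ)} {t : Finset ι} :
    (ZND 𝓔 t).ncard ≤ nondegenCount 𝓔 t.card := by
  classical
  set e := t.equivFin with he
  set F : (ι → ℤ × ℤ) → (Fin t.card → ℤ × ℤ) := fun v k => v ((e.symm k : ι)) with hF
  have hg : Function.Injective (fun k : Fin t.card => ((e.symm k : ι))) :=
    fun a b hab => e.symm.injective (Subtype.coe_injective hab)
  refine Set.ncard_le_ncard_of_injOn F (fun v hv => ?_) ?_ ?_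
  · refine ⟨fun k => ?_, ?_, ?_⟩
    · exact hv.1.1 _ (e.symm k).2
    · have : ∑ k, F v k = ∑ x ∈ t, v x := by
        rw [← Finset.sum_coe_sort t v]
        exact Equiv.sum_comp e.symm (fun x : t => v x)
      rw [this]; exact hv.1.2.2
    · intro s' hne hne'
      set t' := s'.image (fun k => ((e.symm k : ι))) with ht'
      have ht't : t' ⊆ t := by
        intro x hx
        obtain ⟨k, _, rfl⟩ := Finset.mem_image.1 hx
        exact (e.symm k).2
      have hsum : ∑ k ∈ s', F v k = ∑ x ∈ t', v x := by
        rw [ht', Finset.sum_image (fun a _ b _ hab => hg hab)]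
      rw [hsum]
      refine hv.2 t' ht't (hne.image _) ?_
      intro hcontra
      have hcs : t'.card = s'.card := Finset.card_image_of_injective s' hg
      have : s'.card < t.card := by
        have := Finset.card_lt_card (Finset.ssubset_univ_iff.2 hne')
        simpa using this
      rw [hcontra] at hcs; omega
  · intro v hv w hw h
    funext x
    by_cases hx : x ∈ t
    · have := congrFun h (e ⟨x, hx⟩)
      simpa [hF] using this
    · rw [hv.1.2.1 x hx, hw.1.2.1 x hx]
  · apply (Set.Finite.pi' (t := fun _ : Fin t.card => ((𝓔 : Finset (ℤ × ℤ)) : Set (ℤ × ℤ)))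
      fun _ => 𝓔.finite_toSet).subset
    intro u hu k
    exact hu.1 k


lemma pairedOn_empty (v : ι → ℤ × ℤ) : PairedOn (∅ : Finset ι) v :=
  ⟨1, fun i hi => absurd hi (Finset.notMem_empty i), fun _ => rfl, fun _ _ => rfl⟩

lemma exists_block_np {𝓔 : Finset (ℤ × ℤ)} (h0 : (0 : ℤ × ℤ) ∉ 𝓔) {s : Finset ι}
    (hs : s.Nonempty) {v : ι → ℤ × ℤ} (hv : v ∈ ZNP 𝓔 s) :
    ∃ t, t ⊆ s ∧ 2 ≤ t.card ∧ restr t v ∈ ZND 𝓔 t ∧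
      ((t.card = 2 ∧ restr (s \ t) v ∈ ZNP 𝓔 (s \ t)) ∨
        (3 ≤ t.card ∧ restr (s \ t) v ∈ ZS 𝓔 (s \ t))) := by
  classical
  obtain ⟨t, hts, ht2, hnd, hzs⟩ := exists_block h0 hs hv.1
  refine ⟨t, hts, ht2, hnd, ?_⟩
  rcases eq_or_lt_of_le ht2 with h2 | h3
  · left
    refine ⟨h2.symm, hzs, ?_⟩
    intro hpair
    obtain ⟨i, j, hij, htij⟩ := Finset.card_eq_two.1 h2.symm
    obtain ⟨σ', hσ'1, hσ'2, hσ'3⟩ := hpair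
    have hinotst : i ∉ s \ t := by simp [htij, Finset.mem_sdiff]
    have hjnotst : j ∉ s \ t := by simp [htij, Finset.mem_sdiff]
    have hfi : σ' i = i := hσ'3 i hinotst
    have hfj : σ' j = j := hσ'3 j hjnotst
    have hvij : v i + v j = 0 := by
      have := hnd.1.2.2
      rw [htij, Finset.sum_pair hij] at this
      have hi' : restr {i, j} v i = v i := by simp [restr]
      have hj' : restr {i, j} v j = v j := by simp [restr]
      rwa [hi', hj'] at this
    have hit : i ∈ s := hts (htij ▸ Finset.mem_insert_self i {j})
    have hjt : j ∈ s := hts (htij ▸ Finset.mem_insert_of_mem (Finset.mem_singleton_self j))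
    set σ : Equiv.Perm ι := (Equiv.swap i j).trans σ' with hσ
    have happ : ∀ x, x ≠ i → x ≠ j → σ x = σ' x := by
      intro x h1 h2
      simp [hσ, Equiv.trans_apply, Equiv.swap_apply_of_ne_of_ne h1 h2]
    have happi : σ i = j := by simp [hσ, Equiv.trans_apply, Equiv.swap_apply_left, hfj]
    have happj : σ j = i := by simp [hσ, Equiv.trans_apply, Equiv.swap_apply_right, hfi]
    have hσ'ne : ∀ x, x ≠ i → x ≠ j → σ' x ≠ i ∧ σ' x ≠ j := by
      intro x h1 h2
      constructor
      · intro hc; exact h1 (σ'.injective (hc.trans hfi.symm))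
      · intro hc; exact h2 (σ'.injective (hc.trans hfj.symm))
    have hrestr : ∀ x ∈ s \ t, restr (s \ t) v x = v x := fun x hx => by simp [restr, hx]
    apply hv.2
    refine ⟨σ, ?_, ?_, ?_⟩
    · intro x hx
      by_cases h1 : x = i
      · subst h1; exact ⟨happi ▸ hjt, happi ▸ hij.symm, happi ▸ hvij⟩
      · by_cases h2 : x = j
        · subst h2
          refine ⟨happj ▸ hit, happj ▸ hij, ?_⟩
          rw [happj, add_comm]; exact hvij
        · have hxst : x ∈ s \ t := by
            rw [Finset.mem_sdiff, htij]
            exact ⟨hx, by simp [h1, h2]⟩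
          obtain ⟨hmem, hne, hsum⟩ := hσ'1 x hxst
          rw [happ x h1 h2]
          refine ⟨(Finset.mem_sdiff.1 hmem).1, hne, ?_⟩
          rwa [hrestr x hxst, hrestr _ hmem] at hsum
    · intro x
      by_cases h1 : x = i
      · subst h1; rw [happi, happj]
      · by_cases h2 : x = j
        · subst h2; rw [happj, happi]
        · rw [happ x h1 h2]
          obtain ⟨hn1, hn2⟩ := hσ'ne x h1 h2
          rw [happ _ hn1 hn2, hσ'2]
    · intro x hx
      have h1 : x ≠ i := fun hc => hx (hc ▸ hit)
      have h2 : x ≠ j := fun hc => hx (hc ▸ hjt)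
      rw [happ x h1 h2]
      exact hσ'3 x (fun hc => hx (Finset.mem_sdiff.1 hc).1)
  · right; exact ⟨h3, hzs⟩


lemma ZS_empty (𝓔 : Finset (ℤ × ℤ)) : ZS 𝓔 (∅ : Finset ι) = {fun _ => 0} := by
  ext v
  constructor
  · intro h
    funext i
    exact h.2.1 i (Finset.notMem_empty i)
  · intro h
    rw [Set.mem_singleton_iff] at h
    subst h
    exact ⟨fun i hi => absurd hi (Finset.notMem_empty i), fun i _ => rfl, Finset.sum_empty⟩

lemma ZS_bound {𝓔 : Finset (ℤ × ℤ)} {γ : ℝ} (h0 : (0 : ℤ × ℤ) ∉ 𝓔) (hW : 2 ≤ 𝓔.card)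
    (hγ : γ < 1/2)
    (hcond : ∀ m, 3 ≤ m → m ≤ Fintype.card ι →
      (nondegenCount 𝓔 m : ℝ) ≤ (𝓔.card : ℝ) ^ (γ * (m : ℝ))) :
    ∀ n (s : Finset ι), s.card ≤ n →
      ((ZS 𝓔 s).ncard : ℝ) ≤
        ((2 : ℝ) ^ Fintype.card ι) ^ s.card * (𝓔.card : ℝ) ^ ((s.card : ℝ) / 2) := by
  classical
  have hW1 : (1 : ℝ) ≤ (𝓔.card : ℝ) := by exact_mod_cast le_trans one_le_two hW
  have hW0 : (0 : ℝ) < (𝓔.card : ℝ) := lt_of_lt_of_le one_pos hW1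
  have hK1 : (1 : ℝ) ≤ (2 : ℝ) ^ Fintype.card ι := one_le_pow₀ one_le_two
  have hbase : ((ZS 𝓔 (∅ : Finset ι)).ncard : ℝ) ≤
      ((2 : ℝ) ^ Fintype.card ι) ^ (0:ℕ) * (𝓔.card : ℝ) ^ (((0:ℕ) : ℝ) / 2) := by
    rw [ZS_empty, Set.ncard_singleton]
    simp
  intro n
  induction n with
  | zero =>
      intro s hs
      rw [Finset.card_eq_zero.1 (Nat.le_zero.1 hs)]
      simpa using hbase
  | succ n ih =>
      intro s hcard
      rcases s.eq_empty_or_nonempty with rfl | hs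
      · simpa using hbase
      · set B := s.powerset.filter (fun t => 2 ≤ t.card) with hB
        set f : Finset ι → Set (ι → ℤ × ℤ) := fun t =>
          ZS 𝓔 s ∩ {v | restr t v ∈ ZND 𝓔 t ∧ restr (s \ t) v ∈ ZS 𝓔 (s \ t)} with hf
        have hsub : ZS 𝓔 s ⊆ ⋃ t ∈ B, f t := by
          intro v hv
          obtain ⟨t, hts, ht2, h1, h2⟩ := exists_block h0 hs hv
          exact Set.mem_biUnion
            (Finset.mem_filter.2 ⟨Finset.mem_powerset.2 hts, ht2⟩) ⟨hv, h1, h2⟩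
        have hfin : (⋃ t ∈ B, f t).Finite :=
          Set.Finite.biUnion B.finite_toSet
            (fun t _ => (ZS_finite 𝓔 s).subset Set.inter_subset_left)
        have h1 : (ZS 𝓔 s).ncard ≤ ∑ t ∈ B, (f t).ncard :=
          le_trans (Set.ncard_le_ncard hsub hfin) (ncard_biUnion_le B f)
        have hterm : ∀ t ∈ B, ((f t).ncard : ℝ) ≤
            ((2 : ℝ) ^ Fintype.card ι) ^ (s.card - 1) * (𝓔.card : ℝ) ^ ((s.card : ℝ) / 2) := by
          intro t htB
          rw [hB, Finset.mem_filter, Finset.mem_powerset] at htB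
          obtain ⟨hts, ht2⟩ := htB
          have hmul : (f t).ncard ≤ (ZND 𝓔 t).ncard * (ZS 𝓔 (s \ t)).ncard :=
            ncard_le_mul (restr t) (restr (s \ t))
              ((ZS_finite 𝓔 t).subset Set.inter_subset_left) (ZS_finite 𝓔 (s \ t))
              (fun v hv => hv.2) ((restr_pair_injOn 𝓔).mono Set.inter_subset_left)
          have htN : t.card ≤ Fintype.card ι := Finset.card_le_univ t
          have hznd : ((ZND 𝓔 t).ncard : ℝ) ≤ (𝓔.card : ℝ) ^ ((t.card : ℝ) / 2) := by
            rcases eq_or_lt_of_le ht2 with h2 | h3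
            · have e1 : ((t.card : ℝ) / 2) = 1 := by rw [← h2]; norm_num
              rw [e1, Real.rpow_one]
              exact_mod_cast ZND_card_two h2.symm
            · calc ((ZND 𝓔 t).ncard : ℝ) ≤ (nondegenCount 𝓔 t.card : ℝ) :=
                    Nat.cast_le.2 (ZND_card_ge (𝓔 := 𝓔) (t := t))
                _ ≤ (𝓔.card : ℝ) ^ (γ * (t.card : ℝ)) := hcond _ h3 htN
                _ ≤ (𝓔.card : ℝ) ^ ((t.card : ℝ) / 2) := by
                    apply Real.rpow_le_rpow_of_exponent_le hW1
                    have : (0:ℝ) ≤ (t.card : ℝ) := Nat.cast_nonneg _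
                    nlinarith
          have hcc : (s \ t).card + t.card = s.card := Finset.card_sdiff_add_card_eq_card hts
          have hcn : (s \ t).card ≤ n := by
            have h1 := Finset.card_le_card hts
            have h2 : 1 ≤ t.card := le_trans one_le_two ht2
            omega
          have hzs2 := ih (s \ t) hcn
          have hexp : ((t.card : ℝ) / 2) + (((s \ t).card : ℝ) / 2) = (s.card : ℝ) / 2 := by
            have : ((s \ t).card : ℝ) + (t.card : ℝ) = (s.card : ℝ) := by exact_mod_cast hcc
            linarith
          calc ((f t).ncard : ℝ) ≤ ((ZND 𝓔 t).ncard : ℝ) * ((ZS 𝓔 (s \ t)).ncard : ℝ) := by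
                exact_mod_cast hmul
            _ ≤ (𝓔.card : ℝ) ^ ((t.card : ℝ) / 2) *
                (((2 : ℝ) ^ Fintype.card ι) ^ (s \ t).card *
                  (𝓔.card : ℝ) ^ (((s \ t).card : ℝ) / 2)) := by
                apply mul_le_mul hznd hzs2 (Nat.cast_nonneg _) (Real.rpow_nonneg hW0.le _)
            _ = ((2 : ℝ) ^ Fintype.card ι) ^ (s \ t).card * (𝓔.card : ℝ) ^ ((s.card : ℝ) / 2) := by
                rw [← hexp, Real.rpow_add hW0]; ring
            _ ≤ ((2 : ℝ) ^ Fintype.card ι) ^ (s.card - 1) * (𝓔.card : ℝ) ^ ((s.card : ℝ) / 2) := by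
                apply mul_le_mul_of_nonneg_right _ (Real.rpow_nonneg hW0.le _)
                apply pow_le_pow_right₀ hK1
                omega
        have hBcard : (B.card : ℝ) ≤ (2 : ℝ) ^ Fintype.card ι := by
          have h1 : B.card ≤ s.powerset.card := Finset.card_filter_le _ _
          have h2 : s.powerset.card = 2 ^ s.card := Finset.card_powerset s
          have h3 : (2:ℕ) ^ s.card ≤ 2 ^ Fintype.card ι :=
            Nat.pow_le_pow_right (by norm_num) (Finset.card_le_univ s)
          calc (B.card : ℝ) ≤ ((2 ^ Fintype.card ι : ℕ) : ℝ) := by exact_mod_cast h1.trans (h2 ▸ h3)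
            _ = (2 : ℝ) ^ Fintype.card ι := by push_cast; ring
        calc ((ZS 𝓔 s).ncard : ℝ) ≤ ((∑ t ∈ B, (f t).ncard : ℕ) : ℝ) := by exact_mod_cast h1
          _ = ∑ t ∈ B, ((f t).ncard : ℝ) := by push_cast; ring
          _ ≤ ∑ t ∈ B, ((2 : ℝ) ^ Fintype.card ι) ^ (s.card - 1) *
              (𝓔.card : ℝ) ^ ((s.card : ℝ) / 2) := Finset.sum_le_sum hterm
          _ = (B.card : ℝ) * (((2 : ℝ) ^ Fintype.card ι) ^ (s.card - 1) *
              (𝓔.card : ℝ) ^ ((s.card : ℝ) / 2)) := by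
              rw [Finset.sum_const, nsmul_eq_mul]
          _ ≤ ((2 : ℝ) ^ Fintype.card ι) ^ s.card * (𝓔.card : ℝ) ^ ((s.card : ℝ) / 2) := by
              have hs1 : 1 ≤ s.card := Finset.card_pos.2 hs
              have : ((2 : ℝ) ^ Fintype.card ι) * ((2 : ℝ) ^ Fintype.card ι) ^ (s.card - 1) =
                  ((2 : ℝ) ^ Fintype.card ι) ^ s.card := by
                rw [← pow_succ']
                congr 1
                omega
              rw [← this]
              have hKpos : (0:ℝ) ≤ ((2 : ℝ) ^ Fintype.card ι) ^ (s.card - 1) :=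
                pow_nonneg (by positivity) _
              nlinarith [Real.rpow_nonneg hW0.le ((s.card : ℝ) / 2),
                mul_le_mul_of_nonneg_right hBcard (mul_nonneg hKpos (Real.rpow_nonneg hW0.le ((s.card : ℝ) / 2)))]


lemma ZNP_empty (𝓔 : Finset (ℤ × ℤ)) : ZNP 𝓔 (∅ : Finset ι) = ∅ := by
  ext v
  simp only [ZNP, Set.mem_inter_iff, Set.mem_setOf_eq, Set.mem_empty_iff_false, iff_false]
  intro h
  exact h.2 (pairedOn_empty v)

lemma ZNP_bound {𝓔 : Finset (ℤ × ℤ)} {γ : ℝ} (h0 : (0 : ℤ × ℤ) ∉ 𝓔) (hW : 2 ≤ 𝓔.card)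
    (hγ : γ < 1/2)
    (hcond : ∀ m, 3 ≤ m → m ≤ Fintype.card ι →
      (nondegenCount 𝓔 m : ℝ) ≤ (𝓔.card : ℝ) ^ (γ * (m : ℝ))) :
    ∀ n (s : Finset ι), s.card ≤ n →
      ((ZNP 𝓔 s).ncard : ℝ) ≤ ((2 : ℝ) ^ Fintype.card ι) ^ s.card *
        (𝓔.card : ℝ) ^ ((s.card : ℝ) / 2 - 3 * (1/2 - γ)) := by
  classical
  have hW1 : (1 : ℝ) ≤ (𝓔.card : ℝ) := by exact_mod_cast le_trans one_le_two hW
  have hW0 : (0 : ℝ) < (𝓔.card : ℝ) := lt_of_lt_of_le one_pos hW1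
  have hK1 : (1 : ℝ) ≤ (2 : ℝ) ^ Fintype.card ι := one_le_pow₀ one_le_two
  have hbase : ∀ n : ℕ, ((ZNP 𝓔 (∅ : Finset ι)).ncard : ℝ) ≤
      ((2 : ℝ) ^ Fintype.card ι) ^ (Finset.card (∅ : Finset ι)) *
        (𝓔.card : ℝ) ^ (((Finset.card (∅ : Finset ι)) : ℝ) / 2 - 3 * (1/2 - γ)) := by
    intro n
    rw [ZNP_empty, Set.ncard_empty]
    norm_num
    positivity
  intro n
  induction n with
  | zero =>
      intro s hs
      rw [Finset.card_eq_zero.1 (Nat.le_zero.1 hs)]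
      exact hbase 0
  | succ n ih =>
      intro s hcard
      rcases s.eq_empty_or_nonempty with rfl | hs
      · exact hbase 0
      · set B := s.powerset.filter (fun t => 2 ≤ t.card) with hB
        set f : Finset ι → Set (ι → ℤ × ℤ) := fun t =>
          ZS 𝓔 s ∩ {v | restr t v ∈ ZND 𝓔 t ∧
            restr (s \ t) v ∈ (if t.card = 2 then ZNP 𝓔 (s \ t) else ZS 𝓔 (s \ t))} with hf
        have hsub : ZNP 𝓔 s ⊆ ⋃ t ∈ B, f t := by
          intro v hv
          obtain ⟨t, hts, ht2, h1, hd⟩ := exists_block_np h0 hs hv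
          refine Set.mem_biUnion (Finset.mem_filter.2 ⟨Finset.mem_powerset.2 hts, ht2⟩) ?_
          refine ⟨hv.1, h1, ?_⟩
          rcases hd with ⟨he, hm⟩ | ⟨he, hm⟩
          · rw [if_pos he]; exact hm
          · rw [if_neg (by omega)]; exact hm
        have hfin : (⋃ t ∈ B, f t).Finite :=
          Set.Finite.biUnion B.finite_toSet
            (fun t _ => (ZS_finite 𝓔 s).subset Set.inter_subset_left)
        have h1 : (ZNP 𝓔 s).ncard ≤ ∑ t ∈ B, (f t).ncard :=
          le_trans (Set.ncard_le_ncard hsub hfin) (ncard_biUnion_le B f)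
        have hterm : ∀ t ∈ B, ((f t).ncard : ℝ) ≤
            ((2 : ℝ) ^ Fintype.card ι) ^ (s.card - 1) *
              (𝓔.card : ℝ) ^ ((s.card : ℝ) / 2 - 3 * (1/2 - γ)) := by
          intro t htB
          rw [hB, Finset.mem_filter, Finset.mem_powerset] at htB
          obtain ⟨hts, ht2⟩ := htB
          have htN : t.card ≤ Fintype.card ι := Finset.card_le_univ t
          have hcc : (s \ t).card + t.card = s.card := Finset.card_sdiff_add_card_eq_card hts
          have hcn : (s \ t).card ≤ n := by
            have h1 := Finset.card_le_card hts
            have h2 : 1 ≤ t.card := le_trans one_le_two ht2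
            omega
          have hKmono : ((2 : ℝ) ^ Fintype.card ι) ^ (s \ t).card ≤
              ((2 : ℝ) ^ Fintype.card ι) ^ (s.card - 1) := by
            apply pow_le_pow_right₀ hK1
            omega
          by_cases h2 : t.card = 2
          · have hmul : (f t).ncard ≤ (ZND 𝓔 t).ncard * (ZNP 𝓔 (s \ t)).ncard := by
              apply ncard_le_mul (restr t) (restr (s \ t))
                ((ZS_finite 𝓔 t).subset Set.inter_subset_left)
                ((ZS_finite 𝓔 (s \ t)).subset Set.inter_subset_left)
                (fun v hv => ⟨hv.2.1, by have h := hv.2.2; rw [if_pos h2] at h; exact h⟩)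
                ((restr_pair_injOn 𝓔).mono Set.inter_subset_left)
            have hznd : ((ZND 𝓔 t).ncard : ℝ) ≤ (𝓔.card : ℝ) := by
              exact_mod_cast ZND_card_two h2
            have hznp := ih (s \ t) hcn
            have hexp : (1 : ℝ) + (((s \ t).card : ℝ) / 2 - 3 * (1/2 - γ)) =
                (s.card : ℝ) / 2 - 3 * (1/2 - γ) := by
              have hx : ((s \ t).card : ℝ) + (t.card : ℝ) = (s.card : ℝ) := by exact_mod_cast hcc
              rw [h2] at hx; push_cast at hx; linarith
            calc ((f t).ncard : ℝ) ≤
                ((ZND 𝓔 t).ncard : ℝ) * ((ZNP 𝓔 (s \ t)).ncard : ℝ) := by exact_mod_cast hmul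
              _ ≤ (𝓔.card : ℝ) * (((2 : ℝ) ^ Fintype.card ι) ^ (s \ t).card *
                  (𝓔.card : ℝ) ^ (((s \ t).card : ℝ) / 2 - 3 * (1/2 - γ))) :=
                  mul_le_mul hznd hznp (Nat.cast_nonneg _) hW0.le
              _ = ((2 : ℝ) ^ Fintype.card ι) ^ (s \ t).card *
                  (𝓔.card : ℝ) ^ ((s.card : ℝ) / 2 - 3 * (1/2 - γ)) := by
                  rw [← hexp, Real.rpow_add hW0, Real.rpow_one]; ring
              _ ≤ ((2 : ℝ) ^ Fintype.card ι) ^ (s.card - 1) *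
                  (𝓔.card : ℝ) ^ ((s.card : ℝ) / 2 - 3 * (1/2 - γ)) :=
                  mul_le_mul_of_nonneg_right hKmono (Real.rpow_nonneg hW0.le _)
          · have h3 : 3 ≤ t.card := by omega
            have hmul : (f t).ncard ≤ (ZND 𝓔 t).ncard * (ZS 𝓔 (s \ t)).ncard := by
              apply ncard_le_mul (restr t) (restr (s \ t))
                ((ZS_finite 𝓔 t).subset Set.inter_subset_left) (ZS_finite 𝓔 (s \ t))
                (fun v hv => ⟨hv.2.1, by simpa [h2] using hv.2.2⟩)
                ((restr_pair_injOn 𝓔).mono Set.inter_subset_left)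
            have hznd : ((ZND 𝓔 t).ncard : ℝ) ≤ (𝓔.card : ℝ) ^ (γ * (t.card : ℝ)) :=
              le_trans (Nat.cast_le.2 (ZND_card_ge (𝓔 := 𝓔) (t := t))) (hcond _ h3 htN)
            have hzs2 := ZS_bound h0 hW hγ hcond (s \ t).card (s \ t) le_rfl
            have hexp : γ * (t.card : ℝ) + ((s \ t).card : ℝ) / 2 ≤
                (s.card : ℝ) / 2 - 3 * (1/2 - γ) := by
              have hx : ((s \ t).card : ℝ) + (t.card : ℝ) = (s.card : ℝ) := by exact_mod_cast hcc
              have hm3 : (3 : ℝ) ≤ (t.card : ℝ) := by exact_mod_cast h3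
              nlinarith [mul_nonneg (sub_nonneg.2 hm3) (sub_nonneg.2 hγ.le)]
            calc ((f t).ncard : ℝ) ≤
                ((ZND 𝓔 t).ncard : ℝ) * ((ZS 𝓔 (s \ t)).ncard : ℝ) := by exact_mod_cast hmul
              _ ≤ (𝓔.card : ℝ) ^ (γ * (t.card : ℝ)) *
                  (((2 : ℝ) ^ Fintype.card ι) ^ (s \ t).card *
                    (𝓔.card : ℝ) ^ (((s \ t).card : ℝ) / 2)) :=
                  mul_le_mul hznd hzs2 (Nat.cast_nonneg _) (Real.rpow_nonneg hW0.le _)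
              _ = ((2 : ℝ) ^ Fintype.card ι) ^ (s \ t).card *
                  (𝓔.card : ℝ) ^ (γ * (t.card : ℝ) + ((s \ t).card : ℝ) / 2) := by
                  rw [Real.rpow_add hW0]; ring
              _ ≤ ((2 : ℝ) ^ Fintype.card ι) ^ (s.card - 1) *
                  (𝓔.card : ℝ) ^ ((s.card : ℝ) / 2 - 3 * (1/2 - γ)) := by
                  apply mul_le_mul hKmono (Real.rpow_le_rpow_of_exponent_le hW1 hexp)
                    (Real.rpow_nonneg hW0.le _) (pow_nonneg (by positivity) _)
        have hBcard : (B.card : ℝ) ≤ (2 : ℝ) ^ Fintype.card ι := by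
          have h1' : B.card ≤ s.powerset.card := Finset.card_filter_le _ _
          have h2' : s.powerset.card = 2 ^ s.card := Finset.card_powerset s
          have h3' : (2:ℕ) ^ s.card ≤ 2 ^ Fintype.card ι :=
            Nat.pow_le_pow_right (by norm_num) (Finset.card_le_univ s)
          calc (B.card : ℝ) ≤ ((2 ^ Fintype.card ι : ℕ) : ℝ) := by
                exact_mod_cast h1'.trans (h2' ▸ h3')
            _ = (2 : ℝ) ^ Fintype.card ι := by push_cast; ring
        calc ((ZNP 𝓔 s).ncard : ℝ) ≤ ((∑ t ∈ B, (f t).ncard : ℕ) : ℝ) := by exact_mod_cast h1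
          _ = ∑ t ∈ B, ((f t).ncard : ℝ) := by push_cast; ring
          _ ≤ ∑ t ∈ B, ((2 : ℝ) ^ Fintype.card ι) ^ (s.card - 1) *
              (𝓔.card : ℝ) ^ ((s.card : ℝ) / 2 - 3 * (1/2 - γ)) := Finset.sum_le_sum hterm
          _ = (B.card : ℝ) * (((2 : ℝ) ^ Fintype.card ι) ^ (s.card - 1) *
              (𝓔.card : ℝ) ^ ((s.card : ℝ) / 2 - 3 * (1/2 - γ))) := by
              rw [Finset.sum_const, nsmul_eq_mul]
          _ ≤ ((2 : ℝ) ^ Fintype.card ι) ^ s.card *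
              (𝓔.card : ℝ) ^ ((s.card : ℝ) / 2 - 3 * (1/2 - γ)) := by
              have hs1 : 1 ≤ s.card := Finset.card_pos.2 hs
              have hK : ((2 : ℝ) ^ Fintype.card ι) * ((2 : ℝ) ^ Fintype.card ι) ^ (s.card - 1) =
                  ((2 : ℝ) ^ Fintype.card ι) ^ s.card := by
                rw [← pow_succ']
                congr 1
                omega
              rw [← hK]
              have hKpos : (0:ℝ) ≤ ((2 : ℝ) ^ Fintype.card ι) ^ (s.card - 1) :=
                pow_nonneg (by positivity) _
              nlinarith [Real.rpow_nonneg hW0.le ((s.card : ℝ) / 2 - 3 * (1/2 - γ)),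
                mul_le_mul_of_nonneg_right hBcard
                  (mul_nonneg hKpos (Real.rpow_nonneg hW0.le ((s.card : ℝ) / 2 - 3 * (1/2 - γ))))]

end St12

/-- counting non-paired zero-sum ℓ-tuples under condition I (key step of
Lemma 2). -/
theorem statement12 (ℓ : ℕ) (hℓ : 3 ≤ ℓ) :
    ∃ C : ℝ, ∀ (γ : ℝ) (𝓔 : Finset (ℤ × ℤ)),
      0 < γ → γ < 1 / 2 → ((0 : ℤ), (0 : ℤ)) ∉ 𝓔 → 2 ≤ 𝓔.card →
      (∀ ℓ' : ℕ, 3 ≤ ℓ' → ℓ' ≤ ℓ →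
        (nondegenCount 𝓔 ℓ' : ℝ) ≤ (𝓔.card : ℝ) ^ (γ * (ℓ' : ℝ))) →
      (Set.ncard {v : Fin ℓ → ℤ × ℤ |
          (∀ i, v i ∈ 𝓔) ∧ (∑ i, v i = 0) ∧ ¬ Paired v} : ℝ) ≤
        C * (𝓔.card : ℝ) ^ ((ℓ : ℝ) / 2 - 3 * (1 / 2 - γ)) := by
  classical
  refine ⟨((2 : ℝ) ^ ℓ) ^ ℓ, ?_⟩
  intro γ 𝓔 hγ0 hγ h0 hW hcond
  have h0' : (0 : ℤ × ℤ) ∉ 𝓔 := h0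
  have hcond' : ∀ m, 3 ≤ m → m ≤ Fintype.card (Fin ℓ) →
      (nondegenCount 𝓔 m : ℝ) ≤ (𝓔.card : ℝ) ^ (γ * (m : ℝ)) := by
    intro m h3 hm
    exact hcond m h3 (by simpa using hm)
  have hset : {v : Fin ℓ → ℤ × ℤ | (∀ i, v i ∈ 𝓔) ∧ (∑ i, v i = 0) ∧ ¬ Paired v} =
      St12.ZNP 𝓔 (Finset.univ : Finset (Fin ℓ)) := by
    ext v
    simp only [St12.ZNP, St12.ZS, Set.mem_inter_iff, Set.mem_setOf_eq]
    constructor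
    · rintro ⟨h1, h2, h3⟩
      refine ⟨⟨fun i _ => h1 i, fun i hi => absurd (Finset.mem_univ i) hi, h2⟩, ?_⟩
      rintro ⟨σ, hσ1, hσ2, hσ3⟩
      exact h3 ⟨σ, fun i => (hσ1 i (Finset.mem_univ i)).2.1, hσ2,
        fun i => (hσ1 i (Finset.mem_univ i)).2.2⟩
    · rintro ⟨⟨h1, h2, h3⟩, h4⟩
      refine ⟨fun i => h1 i (Finset.mem_univ i), h3, ?_⟩
      rintro ⟨σ, hσ1, hσ2, hσ3⟩
      exact h4 ⟨σ, fun i _ => ⟨Finset.mem_univ _, hσ1 i, hσ3 i⟩, hσ2,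
        fun i hi => absurd (Finset.mem_univ i) hi⟩
  have hmain := St12.ZNP_bound (ι := Fin ℓ) h0' hW hγ hcond' ℓ Finset.univ (by simp)
  rw [hset]
  simpa using hmain

end St12Aux
end
end
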